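/- Let (N,m0) be a marked N-layer (open or closed) Π³-net. Then R(m0) ⊆ ⋂_{i=1}^N Inv_i(m0). -/

import Mathlib

open Finset

section PetriBasics

variable {P T : Type} [Fintype P] [Fintype T]

/-- Transition `t` is enabled at marking `m`. -/
def Enabled (Wm : P → T → ℕ) (m : P → ℕ) (t : T) : Prop :=
  ∀ p, Wm p t ≤ m p

/-- The marking obtained by firing transition `t` at marking `m`. -/
def Fire (Wm Wp : P → T → ℕ) (m : P → ℕ) (t : T) : P → ℕ :=
  fun p => m p - Wm p t + Wp p t

/-- One firing step. -/
def Step (Wm Wp : P → T → ℕ) (m m' : P → ℕ) : Prop :=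
  ∃ t, Enabled Wm m t ∧ m' = Fire Wm Wp m t

/-- Reachability. -/
def Reach (Wm Wp : P → T → ℕ) : (P → ℕ) → (P → ℕ) → Prop :=
  Relation.ReflTransGen (Step Wm Wp)

/-- One firing step using a transition from the set `S`. -/
def StepIn (Wm Wp : P → T → ℕ) (S : T → Prop) (m m' : P → ℕ) : Prop :=
  ∃ t, S t ∧ Enabled Wm m t ∧ m' = Fire Wm Wp m t

/-- Reachability using only transitions from the set `S`. -/
def ReachIn (Wm Wp : P → T → ℕ) (S : T → Prop) : (P → ℕ) → (P → ℕ) → Prop :=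
  Relation.ReflTransGen (StepIn Wm Wp S)

/-- The marked net `(N, m0)` is live. -/
def LiveMarked (Wm Wp : P → T → ℕ) (m0 : P → ℕ) : Prop :=
  ∀ (t : T) (m : P → ℕ), Reach Wm Wp m0 m →
    ∃ m', Reach Wm Wp m m' ∧ Enabled Wm m' t

/-- `b` is a bag of the net. -/
def IsBag (Wm Wp : P → T → ℕ) (b : P → ℕ) : Prop :=
  ∃ t, b = (fun p => Wm p t) ∨ b = (fun p => Wp p t)

/-- Edges of the bag graph. -/
def BagEdge (Wm Wp : P → T → ℕ) (b b' : P → ℕ) : Prop :=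
  ∃ t, b = (fun p => Wm p t) ∧ b' = (fun p => Wp p t)

/-- Every connected component of the bag graph is strongly connected. -/
def WeaklyReversible (Wm Wp : P → T → ℕ) : Prop :=
  ∀ b b' : P → ℕ,
    Relation.ReflTransGen (fun x y => BagEdge Wm Wp x y ∨ BagEdge Wm Wp y x) b b' →
    Relation.ReflTransGen (BagEdge Wm Wp) b b'

/-- `w · W(t)`, where `W = W⁺ − W⁻` is the incidence matrix. -/
def IncDot (Wm Wp : P → T → ℕ) (w : P → ℚ) (t : T) : ℚ :=
  ∑ p, w p * ((Wp p t : ℚ) - (Wm p t : ℚ))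

/-- `w` is a witness of the bag `b`. -/
def IsWitness (Wm Wp : P → T → ℕ) (b : P → ℕ) (w : P → ℚ) : Prop :=
  ∀ t, (b = (fun p => Wm p t) → IncDot Wm Wp w t = -1) ∧
       (b = (fun p => Wp p t) → IncDot Wm Wp w t = 1) ∧
       (b ≠ (fun p => Wm p t) → b ≠ (fun p => Wp p t) → IncDot Wm Wp w t = 0)

/-- `N` is a Π²-net. -/
def IsPi2 (Wm Wp : P → T → ℕ) : Prop :=
  WeaklyReversible Wm Wp ∧ ∀ b, IsBag Wm Wp b → ∃ w, IsWitness Wm Wp b w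

/-- The potential of a place: `‖b_p‖ − 1`. -/
def potOf (bag : P → P → ℕ) (p : P) : ℕ := (∑ q, bag p q) - 1

/-- Minimum of `f` over `S`, with default value `d` when `S` is empty. -/
def minPotD {α : Type} (S : Finset α) (f : α → ℕ) (d : ℕ) : ℕ :=
  if h : S.Nonempty then S.inf' h f else d

end PetriBasics

/-- An `Nn`-layer closed Π³-net. -/
structure ClosedPi3 (P T : Type) [Fintype P] [Fintype T] (Nn : ℕ) where
  Wm : P → T → ℕ
  Wp : P → T → ℕ
  no_useless : ∀ t, (fun p => Wm p t) ≠ (fun p => Wp p t)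
  no_dup : ∀ t t' : T, (fun p => Wm p t) = (fun p => Wm p t') →
      (fun p => Wp p t) = (fun p => Wp p t') → t = t'
  /-- the bag associated with each place -/
  bag : P → P → ℕ
  /-- the layer of each place -/
  layer : P → ℕ
  bag_isBag : ∀ p, IsBag Wm Wp (bag p)
  bag_surj : ∀ b, IsBag Wm Wp b → ∃ p, bag p = b
  bag_inj : Function.Injective bag
  bag_self : ∀ p, bag p p = 1
  layer_pos : ∀ p, 1 ≤ layer p
  layer_le : ∀ p, layer p ≤ Nn
  layer_surj : ∀ i, 1 ≤ i → i ≤ Nn → ∃ p, layer p = i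
  edge_layer : ∀ p q : P, BagEdge Wm Wp (bag p) (bag q) → layer p = layer q
  layer_conn : ∀ p q : P, layer p = layer q →
      Relation.ReflTransGen (BagEdge Wm Wp) (bag p) (bag q)
  resource : ∀ p q : P, q ≠ p → 0 < bag p q →
      layer q + 1 = layer p ∧ ∀ r, layer r = layer q → potOf bag r ≤ potOf bag q

namespace ClosedPi3

variable {P T : Type} [Fintype P] [Fintype T] {Nn : ℕ} (C : ClosedPi3 P T Nn)

def pot (p : P) : ℕ := potOf C.bag p

/-- `P_i`: the places of layer `i`. -/
def places (i : ℕ) : Finset P := Finset.univ.filter (fun p => C.layer p = i)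

/-- `POT_i`: the maximal potential in layer `i`. -/
def POT (i : ℕ) : ℕ := (C.places i).sup C.pot

/-- `P_i^max`: the places of maximal potential in layer `i`. -/
def placesMax (i : ℕ) : Finset P := (C.places i).filter (fun p => C.pot p = C.POT i)

/-- `cin(p) = POT_i − pot(p)` for `p ∈ P_i`. -/
def cin (p : P) : ℤ := (C.POT (C.layer p) : ℤ) - (C.pot p : ℤ)

/-- The invariant vector `v^(i)` (for `i = Nn` this is `v^(N)`). -/
def vvec (i : ℕ) : P → ℤ :=
  if i = Nn then (fun p => if C.layer p = Nn then 1 else 0)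
  else fun p => (if C.layer p = i then 1 else 0) + (if C.layer p = i + 1 then C.cin p else 0)

/-- `m · v^(i)`. -/
def vdot (i : ℕ) (m : P → ℕ) : ℤ := ∑ p, C.vvec i p * (m p : ℤ)

/-- `m ∈ Inv_i(m0)`. -/
def InvSet (m0 : P → ℕ) (i : ℕ) (m : P → ℕ) : Prop := C.vdot i m = C.vdot i m0

/-- `m ∈ Live_i`. -/
def LiveSet (i : ℕ) (m : P → ℕ) : Prop :=
  if i = Nn then 0 < ∑ p ∈ C.places Nn, m p
  else minPotD ((C.places (i + 1)).filter (fun p => 0 < m p)) C.pot (C.POT (i + 1))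
        ≤ ∑ p ∈ C.places i, m p

/-- `t` belongs to `⋃ {T_i | S i}`: the input bag of `t` lies in a layer satisfying `S`. -/
def transIn (S : ℕ → Prop) (t : T) : Prop :=
  ∃ p, S (C.layer p) ∧ C.bag p = (fun q => C.Wm q t)

/-- The marking `m` is `i`-live. -/
def iLive (i : ℕ) (m : P → ℕ) : Prop :=
  ∀ t, C.transIn (· ≤ i) t →
    ∃ m', ReachIn C.Wm C.Wp (C.transIn (· ≤ i)) m m' ∧ Enabled C.Wm m' t

end ClosedPi3

/-- An `Nn`-layer open Π³-net over places `P`: it is obtained from an `Nn`-layer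
closed Π³-net over `Option P` by deleting the place `none` (a.k.a. `p_ext`),
which lies in layer `Nn`. -/
structure OpenPi3 (P T : Type) [Fintype P] [Fintype T] (Nn : ℕ) where
  closed : ClosedPi3 (Option P) T Nn
  pext_layer : closed.layer none = Nn

namespace OpenPi3

variable {P T : Type} [Fintype P] [Fintype T] {Nn : ℕ} (O : OpenPi3 P T Nn)

/-- Backward incidence matrix of the open net. -/
def Wm : P → T → ℕ := fun p t => O.closed.Wm (some p) t

/-- Forward incidence matrix of the open net. -/
def Wp : P → T → ℕ := fun p t => O.closed.Wp (some p) t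

def layer (p : P) : ℕ := O.closed.layer (some p)

def pot (p : P) : ℕ := O.closed.pot (some p)

/-- `pot(p_ext)`. -/
def potExt : ℕ := O.closed.pot none

/-- `P_i`: the (remaining) places of layer `i`. -/
def places (i : ℕ) : Finset P := Finset.univ.filter (fun p => O.layer p = i)

/-- `POT_i`, with `POT_N = pot(p_ext)` for open nets. -/
def POT (i : ℕ) : ℕ := if i = Nn then O.potExt else (O.places i).sup O.pot

def placesMax (i : ℕ) : Finset P := (O.places i).filter (fun p => O.pot p = O.POT i)

def cin (p : P) : ℤ := (O.POT (O.layer p) : ℤ) - (O.pot p : ℤ)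

/-- The invariant vector `v^(i)` (used for `1 ≤ i ≤ Nn − 1`). -/
def vvec (i : ℕ) : P → ℤ :=
  fun p => (if O.layer p = i then 1 else 0) + (if O.layer p = i + 1 then O.cin p else 0)

def vdot (i : ℕ) (m : P → ℕ) : ℤ := ∑ p, O.vvec i p * (m p : ℤ)

def InvSet (m0 : P → ℕ) (i : ℕ) (m : P → ℕ) : Prop :=
  if i = Nn then True else O.vdot i m = O.vdot i m0

/-- `m ∈ Live_i` for the open net: for `i = N − 1` the virtual place `p_ext`
always counts as marked. -/
def LiveSet (i : ℕ) (m : P → ℕ) : Prop :=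
  if i = Nn then True
  else if i + 1 = Nn then
    min O.potExt
        (minPotD ((O.places Nn).filter (fun p => 0 < m p)) O.pot O.potExt)
      ≤ ∑ p ∈ O.places i, m p
  else
    minPotD ((O.places (i + 1)).filter (fun p => 0 < m p)) O.pot (O.POT (i + 1))
      ≤ ∑ p ∈ O.places i, m p

def transIn (S : ℕ → Prop) (t : T) : Prop := O.closed.transIn S t

def iLive (i : ℕ) (m : P → ℕ) : Prop :=
  ∀ t, O.transIn (· ≤ i) t →
    ∃ m', ReachIn O.Wm O.Wp (O.transIn (· ≤ i)) m m' ∧ Enabled O.Wm m' t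

end OpenPi3

section InvAux

open Finset
open scoped Classical
variable {P T : Type} [Fintype P] [Fintype T] {Nn : ℕ}

lemma pot_erase (C : ClosedPi3 P T Nn) (p : P) :
    ∑ q ∈ univ.erase p, C.bag p q = C.pot p := by
  have h := Finset.sum_erase_add univ (C.bag p) (mem_univ p)
  have hb := C.bag_self p
  unfold ClosedPi3.pot potOf
  omega

lemma pot_max (C : ClosedPi3 P T Nn) (p q : P) (h : q ≠ p) (hb : 0 < C.bag p q) :
    C.pot q = C.POT (C.layer q) := by
  obtain ⟨-, hmax⟩ := C.resource p q h hb
  apply le_antisymm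
  · exact Finset.le_sup (by simp [ClosedPi3.places])
  · exact Finset.sup_le (fun r hr => hmax r (by simpa [ClosedPi3.places] using hr))

lemma closed_bagdot (C : ClosedPi3 P T Nn) (i : ℕ) (p : P) :
    ∑ q, C.vvec i q * (C.bag p q : ℤ) =
      if i = Nn then (if C.layer p = Nn then 1 else 0)
      else (if C.layer p = i then 1 else 0) +
           (if C.layer p = i + 1 then (C.POT (i + 1) : ℤ) else 0) := by
  by_cases hiN : i = Nn
  · subst hiN
    simp only [ClosedPi3.vvec, if_pos rfl]
    rw [Finset.sum_eq_single_of_mem p (mem_univ p)]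
    · simp [C.bag_self p]
    · intro q _ hq
      by_cases hb : C.bag p q = 0
      · simp [hb]
      · obtain ⟨hl, -⟩ := C.resource p q hq (Nat.pos_of_ne_zero hb)
        have hle := C.layer_le p
        have : C.layer q ≠ i := by omega
        simp [this]
  · simp only [ClosedPi3.vvec, if_neg hiN]
    rw [← Finset.sum_erase_add _ _ (mem_univ p)]
    have hrest : ∑ q ∈ univ.erase p,
        ((if C.layer q = i then (1 : ℤ) else 0) +
          (if C.layer q = i + 1 then C.cin q else 0)) * (C.bag p q : ℤ)
        = (if C.layer p = i + 1 then (1 : ℤ) else 0) * (C.pot p : ℤ) := by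
      have hcongr : ∀ q ∈ univ.erase p,
          ((if C.layer q = i then (1 : ℤ) else 0) +
            (if C.layer q = i + 1 then C.cin q else 0)) * (C.bag p q : ℤ)
          = (if C.layer p = i + 1 then (1 : ℤ) else 0) * (C.bag p q : ℤ) := by
        intro q hq
        have hqp : q ≠ p := (Finset.mem_erase.1 hq).1
        by_cases hb : C.bag p q = 0
        · simp [hb]
        · obtain ⟨hl, -⟩ := C.resource p q hqp (Nat.pos_of_ne_zero hb)
          have hcin : C.layer q = i + 1 → C.cin q = 0 := by
            intro h
            rw [ClosedPi3.cin, pot_max C p q hqp (Nat.pos_of_ne_zero hb), sub_self]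
          by_cases h1 : C.layer q = i
          · have hp : C.layer p = i + 1 := by omega
            have h2 : C.layer q ≠ i + 1 := by omega
            simp [h1, hp, h2]
          · by_cases h2 : C.layer q = i + 1
            · have hp : C.layer p ≠ i + 1 := by omega
              simp [h1, h2, hcin h2, hp]
            · have hp : C.layer p ≠ i + 1 := by omega
              simp [h1, h2, hp]
      rw [Finset.sum_congr rfl hcongr, ← Finset.mul_sum]
      congr 1
      rw [← Nat.cast_sum, pot_erase]
    rw [hrest, C.bag_self p]
    by_cases hL : C.layer p = i + 1
    · have h1 : C.layer p ≠ i := by omega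
      simp only [hL, if_pos rfl, if_neg h1, ClosedPi3.cin, hL]
      push_cast
      ring
    · simp [hL]
  
lemma closed_step_vdot (C : ClosedPi3 P T Nn) (i : ℕ) (m m' : P → ℕ)
    (h : Step C.Wm C.Wp m m') : C.vdot i m' = C.vdot i m := by
  obtain ⟨t, ht, rfl⟩ := h
  obtain ⟨pm, hpm⟩ := C.bag_surj _ ⟨t, Or.inl rfl⟩
  obtain ⟨pp, hpp⟩ := C.bag_surj _ ⟨t, Or.inr rfl⟩
  have hlayer : C.layer pm = C.layer pp := C.edge_layer pm pp ⟨t, hpm, hpp⟩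
  have h1 := closed_bagdot C i pm
  have h2 := closed_bagdot C i pp
  simp only [hpm] at h1
  simp only [hpp] at h2
  have hc : ∀ p, ((m p - C.Wm p t + C.Wp p t : ℕ) : ℤ)
      = (m p : ℤ) - (C.Wm p t : ℤ) + (C.Wp p t : ℤ) := by
    intro p; have := ht p; omega
  unfold ClosedPi3.vdot Fire
  simp only [hc, mul_sub, mul_add, Finset.sum_add_distrib, Finset.sum_sub_distrib]
  rw [h1, h2, hlayer]
  ring

lemma closed_reach_vdot (C : ClosedPi3 P T Nn) (i : ℕ) (m0 m : P → ℕ)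
    (h : Reach C.Wm C.Wp m0 m) : C.vdot i m = C.vdot i m0 := by
  induction h with
  | refl => rfl
  | tail _ hstep ih => rw [closed_step_vdot C i _ _ hstep, ih]

lemma open_POT_eq (O : OpenPi3 P T Nn) (j : ℕ) (hj : j ≠ Nn) :
    O.POT j = O.closed.POT j := by
  rw [OpenPi3.POT, if_neg hj]
  apply le_antisymm
  · apply Finset.sup_le
    intro p hp
    exact Finset.le_sup (f := O.closed.pot)
      (Finset.mem_filter.2 ⟨Finset.mem_univ _, (Finset.mem_filter.1 hp).2⟩)
  · apply Finset.sup_le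
    intro x hx
    rw [ClosedPi3.places, Finset.mem_filter] at hx
    have hxl : O.closed.layer x = j := hx.2
    match x with
    | none => exact absurd (hxl.symm.trans O.pext_layer) hj
    | some p =>
        exact Finset.le_sup (f := O.pot)
          (Finset.mem_filter.2 ⟨Finset.mem_univ _, hxl⟩)

lemma open_bag_none (O : OpenPi3 P T Nn) (p0 : P) :
    O.closed.bag (some p0) none = 0 := by
  by_contra hb
  obtain ⟨hl, -⟩ := O.closed.resource (some p0) none (by simp)
    (Nat.pos_of_ne_zero hb)
  have := O.closed.layer_le (some p0)
  rw [O.pext_layer] at hl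
  omega

lemma open_rest_sum (O : OpenPi3 P T Nn) (p0 : P) :
    ∑ q ∈ univ.erase p0, O.closed.bag (some p0) (some q) = O.pot p0 := by
  have ho : ∑ x : Option P, O.closed.bag (some p0) x
      = O.closed.bag (some p0) none + ∑ q : P, O.closed.bag (some p0) (some q) :=
    Fintype.sum_option _
  have he : ∑ q ∈ univ.erase p0, O.closed.bag (some p0) (some q)
      + O.closed.bag (some p0) (some p0) = ∑ q : P, O.closed.bag (some p0) (some q) :=
    Finset.sum_erase_add univ _ (mem_univ p0)
  have hb := O.closed.bag_self (some p0)
  have hn := open_bag_none O p0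
  unfold OpenPi3.pot ClosedPi3.pot potOf
  omega

lemma open_none_sum (O : OpenPi3 P T Nn) :
    ∑ q, O.closed.bag none (some q) = O.potExt := by
  have ho : ∑ x : Option P, O.closed.bag none x
      = O.closed.bag none none + ∑ q : P, O.closed.bag none (some q) :=
    Fintype.sum_option _
  have hb := O.closed.bag_self none
  unfold OpenPi3.potExt ClosedPi3.pot potOf
  omega

lemma open_cin_zero (O : OpenPi3 P T Nn) (x : Option P) (q : P)
    (hq : (some q : Option P) ≠ x) (hb : 0 < O.closed.bag x (some q))
    (j : ℕ) (h2 : O.closed.layer (some q) = j) (hj : j ≠ Nn) :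
    O.cin q = 0 := by
  have hpm := pot_max O.closed x (some q) hq hb
  rw [h2] at hpm
  have hq2 : O.layer q = j := h2
  rw [OpenPi3.cin, hq2, open_POT_eq O j hj,
    show O.pot q = O.closed.pot (some q) from rfl, hpm, sub_self]

lemma open_bagdot (O : OpenPi3 P T Nn) (i : ℕ) (hiN : i < Nn) (x : Option P) :
    ∑ q, O.vvec i q * (O.closed.bag x (some q) : ℤ) =
      (if O.closed.layer x = i then 1 else 0) +
      (if O.closed.layer x = i + 1 then (O.POT (i + 1) : ℤ) else 0) := by
  match x with
  | none =>
    rw [O.pext_layer]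
    have hNi : Nn ≠ i := by omega
    have hterm : ∀ q ∈ (univ : Finset P),
        O.vvec i q * (O.closed.bag none (some q) : ℤ)
        = (if Nn = i + 1 then (1 : ℤ) else 0) * (O.closed.bag none (some q) : ℤ) := by
      intro q _
      by_cases hb : O.closed.bag none (some q) = 0
      · simp [hb]
      · obtain ⟨hl, -⟩ := O.closed.resource none (some q) (by simp)
          (Nat.pos_of_ne_zero hb)
        rw [O.pext_layer] at hl
        simp only [OpenPi3.vvec]
        by_cases hN : Nn = i + 1
        · have e1 : O.layer q = i := show O.closed.layer (some q) = i by omega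
          have e2 : O.layer q ≠ i + 1 :=
            show O.closed.layer (some q) ≠ i + 1 by omega
          simp [e1, e2, hN]
        · have e1 : O.layer q ≠ i :=
            show O.closed.layer (some q) ≠ i by omega
          by_cases h2 : O.closed.layer (some q) = i + 1
          · have hii : i + 1 ≠ Nn := by omega
            have hcin := open_cin_zero O none q (by simp)
              (Nat.pos_of_ne_zero hb) (i + 1) h2 hii
            have h2' : O.layer q = i + 1 := h2
            simp [e1, h2', hcin, hN]
          · have h2' : O.layer q ≠ i + 1 := h2
            simp [e1, h2', hN]
    rw [Finset.sum_congr rfl hterm, ← Finset.mul_sum, ← Nat.cast_sum, open_none_sum,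
      if_neg hNi]
    by_cases hN : Nn = i + 1
    · rw [if_pos hN, if_pos hN,
        show O.POT (i + 1) = O.potExt from by rw [← hN, OpenPi3.POT, if_pos rfl]]
      ring
    · rw [if_neg hN, if_neg hN]
      ring
  | some p0 =>
    rw [← Finset.sum_erase_add _ _ (mem_univ p0)]
    have hrest : ∑ q ∈ univ.erase p0,
        O.vvec i q * (O.closed.bag (some p0) (some q) : ℤ)
        = (if O.closed.layer (some p0) = i + 1 then (1 : ℤ) else 0) * (O.pot p0 : ℤ) := by
      have hcongr : ∀ q ∈ univ.erase p0,
          O.vvec i q * (O.closed.bag (some p0) (some q) : ℤ)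
          = (if O.closed.layer (some p0) = i + 1 then (1 : ℤ) else 0) *
              (O.closed.bag (some p0) (some q) : ℤ) := by
        intro q hq
        have hqp : (some q : Option P) ≠ some p0 := by
          simp [(Finset.mem_erase.1 hq).1]
        by_cases hb : O.closed.bag (some p0) (some q) = 0
        · simp [hb]
        · obtain ⟨hl, -⟩ := O.closed.resource (some p0) (some q) hqp
            (Nat.pos_of_ne_zero hb)
          simp only [OpenPi3.vvec]
          by_cases h1 : O.closed.layer (some q) = i
          · have hp : O.closed.layer (some p0) = i + 1 := by omega
            have h1' : O.layer q = i := h1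
            have h2' : O.layer q ≠ i + 1 :=
              show O.closed.layer (some q) ≠ i + 1 by omega
            simp [h1', h2', hp]
          · by_cases h2 : O.closed.layer (some q) = i + 1
            · have hp : O.closed.layer (some p0) ≠ i + 1 := by omega
              have hii : i + 1 ≠ Nn := by
                have := O.closed.layer_le (some p0)
                omega
              have hcin := open_cin_zero O (some p0) q hqp
                (Nat.pos_of_ne_zero hb) (i + 1) h2 hii
              have h1' : O.layer q ≠ i := h1
              have h2' : O.layer q = i + 1 := h2
              simp [h1', h2', hcin, hp]
            · have hp : O.closed.layer (some p0) ≠ i + 1 := by omega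
              have h1' : O.layer q ≠ i := h1
              have h2' : O.layer q ≠ i + 1 := h2
              simp [h1', h2', hp]
      rw [Finset.sum_congr rfl hcongr, ← Finset.mul_sum, ← Nat.cast_sum, open_rest_sum]
    rw [hrest, O.closed.bag_self (some p0)]
    simp only [OpenPi3.vvec]
    by_cases hL : O.closed.layer (some p0) = i + 1
    · have h1 : O.closed.layer (some p0) ≠ i := by omega
      have hL' : O.layer p0 = i + 1 := hL
      have h1' : O.layer p0 ≠ i := h1
      have hcin : O.cin p0 = (O.POT (i + 1) : ℤ) - (O.pot p0 : ℤ) := by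
        rw [OpenPi3.cin, hL']
      rw [if_pos hL, if_neg h1', if_pos hL', if_neg h1, if_pos hL, hcin]
      push_cast
      ring
    · have hL' : ¬ O.layer p0 = i + 1 := hL
      rw [if_neg hL, if_neg hL', if_neg hL]
      by_cases h1 : O.closed.layer (some p0) = i
      · have h1' : O.layer p0 = i := h1
        rw [if_pos h1', if_pos h1]
        ring
      · have h1' : ¬ O.layer p0 = i := h1
        rw [if_neg h1', if_neg h1]
        ring

lemma open_step_vdot (O : OpenPi3 P T Nn) (i : ℕ) (hiN : i < Nn) (m m' : P → ℕ)
    (h : Step O.Wm O.Wp m m') : O.vdot i m' = O.vdot i m := by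
  obtain ⟨t, ht, rfl⟩ := h
  obtain ⟨pm, hpm⟩ := O.closed.bag_surj _ ⟨t, Or.inl rfl⟩
  obtain ⟨pp, hpp⟩ := O.closed.bag_surj _ ⟨t, Or.inr rfl⟩
  have hlayer : O.closed.layer pm = O.closed.layer pp :=
    O.closed.edge_layer pm pp ⟨t, hpm, hpp⟩
  have h1 := open_bagdot O i hiN pm
  have h2 := open_bagdot O i hiN pp
  simp only [hpm] at h1
  simp only [hpp] at h2
  have h1' : ∑ x : P, O.vvec i x * (O.Wm x t : ℤ)
      = (if O.closed.layer pm = i then 1 else 0) +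
        (if O.closed.layer pm = i + 1 then (O.POT (i + 1) : ℤ) else 0) := h1
  have h2' : ∑ x : P, O.vvec i x * (O.Wp x t : ℤ)
      = (if O.closed.layer pp = i then 1 else 0) +
        (if O.closed.layer pp = i + 1 then (O.POT (i + 1) : ℤ) else 0) := h2
  have hc : ∀ p, ((m p - O.Wm p t + O.Wp p t : ℕ) : ℤ)
      = (m p : ℤ) - (O.Wm p t : ℤ) + (O.Wp p t : ℤ) := by
    intro p; have := ht p; omega
  unfold OpenPi3.vdot Fire
  simp only [hc, mul_sub, mul_add, Finset.sum_add_distrib, Finset.sum_sub_distrib]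
  rw [h1', h2', hlayer]
  ring

end InvAux

/-- `R(m0) ⊆ ⋂_{i=1}^N Inv_i(m0)` for marked N-layer (open or
closed) Π³-nets. -/
theorem stmt_3 :
    (∀ (P T : Type) [Fintype P] [Fintype T] (Nn : ℕ) (C : ClosedPi3 P T Nn)
        (m0 m : P → ℕ), Reach C.Wm C.Wp m0 m →
      ∀ i ∈ Finset.Icc 1 Nn, C.InvSet m0 i m) ∧
    (∀ (P T : Type) [Fintype P] [Fintype T] (Nn : ℕ) (O : OpenPi3 P T Nn)
        (m0 m : P → ℕ), Reach O.Wm O.Wp m0 m →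
      ∀ i ∈ Finset.Icc 1 Nn, O.InvSet m0 i m) := by
  constructor
  · intro P T _ _ Nn C m0 m h i _
    exact closed_reach_vdot C i m0 m h
  · intro P T _ _ Nn O m0 m h i hi
    rw [Finset.mem_Icc] at hi
    unfold OpenPi3.InvSet
    by_cases hN : i = Nn
    · simp [hN]
    · rw [if_neg hN]
      have hiN : i < Nn := lt_of_le_of_ne hi.2 hN
      induction h with
      | refl => rfl
      | tail _ hstep ih => rw [open_step_vdot O i hiN _ _ hstep, ih]
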